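/- Let G be an Abelian group whose cardinality κ = |G| is a singular cardinal. Then G admits a maximal translation invariant κ-bounded topology; that is, there exists a topology τ on G such that all translations x ↦ g + x are τ-continuous, every nonempty τ-open set is κ-large, τ has no isolated points, and every topology strictly finer than τ has an isolated point. -/

import Mathlib

open scoped Pointwise
open Cardinal

universe u

variable {G : Type u}

/-- `A` is `κ`-large in an Abelian group: `G = F + A` for some `F` with `|F| < κ`. -/
def AddLarge [AddCommGroup G] (κ : Cardinal.{u}) (A : Set G) : Prop :=
  ∃ F : Set G, #F < κ ∧ F + A = Set.univ

/-- A topology on an Abelian group is translation invariant if all translations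
`x ↦ g + x` are continuous. -/
def TranslationInvariant [AddCommGroup G] (τ : TopologicalSpace G) : Prop :=
  ∀ g : G, @Continuous G G τ τ fun x => g + x

/-- A translation invariant topology on an Abelian group of cardinality `κ` is
`κ`-bounded if every nonempty open set is `κ`-large. -/
def AddKBounded [AddCommGroup G] (κ : Cardinal.{u}) (τ : TopologicalSpace G) : Prop :=
  ∀ U : Set G, τ.IsOpen U → U.Nonempty → AddLarge κ U

/-- A topology has no isolated points if no singleton is open. -/
def NoIsolatedPoints (τ : TopologicalSpace G) : Prop :=
  ∀ x : G, ¬ τ.IsOpen {x}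

/-- A topology (with no isolated points) is maximal if every strictly finer topology
has an isolated point (an open singleton). -/
def MaximalTopology (τ : TopologicalSpace G) : Prop :=
  ∀ τ' : TopologicalSpace G,
    (∀ U : Set G, τ.IsOpen U → τ'.IsOpen U) →
    (∃ V : Set G, τ'.IsOpen V ∧ ¬ τ.IsOpen V) →
    ∃ x : G, τ'.IsOpen {x}

/-- `κ` is a singular cardinal: infinite, with cofinality strictly less than `κ`. -/
def Singular (κ : Cardinal.{u}) : Prop := ℵ₀ ≤ κ ∧ κ.ord.cof < κ

namespace StatementEightAux

attribute [local instance] Ultrafilter.add Ultrafilter.addSemigroup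

variable [AddCommGroup G]

/-- `T` is `κ`-thick: it contains a translate of every set of size `< κ`. -/
def Thick (κ : Cardinal.{u}) (T : Set G) : Prop :=
  ∀ F : Set G, #F < κ → ∃ x : G, ∀ f ∈ F, x + f ∈ T

/-- The basic "shift" operation: `shf x U = -x + U`. -/
def shf (x : G) (U : Set G) : Set G := {y | x + y ∈ U}

theorem shf_shf (x g : G) (U : Set G) : shf x (shf g U) = shf (g + x) U := by
  ext y; simp [shf, add_assoc]

theorem shf_mono {x : G} {U V : Set G} (h : U ⊆ V) : shf x U ⊆ shf x V :=
  fun _ hy => h hy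

theorem addLarge_of_shift {κ : Cardinal.{u}} {U : Set G} (x : G)
    (h : AddLarge κ (shf x U)) : AddLarge κ U := by
  obtain ⟨F, hF, hFA⟩ := h
  refine ⟨(fun f => f - x) '' F, ?_, ?_⟩
  · rwa [Cardinal.mk_image_eq (fun a b hab => by simpa using hab)]
  · apply Set.eq_univ_of_forall
    intro g
    have hg : g ∈ F + shf x U := hFA ▸ Set.mem_univ g
    rw [Set.mem_add] at hg
    obtain ⟨f, hf, s, hs, hfs⟩ := hg
    rw [Set.mem_add]
    exact ⟨f - x, Set.mem_image_of_mem _ hf, x + s, hs, by rw [← hfs]; abel⟩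

theorem not_addLarge_iff {κ : Cardinal.{u}} {A : Set G} :
    ¬ AddLarge κ A ↔ Thick κ Aᶜ := by
  constructor
  · intro h F hF
    have hF' : #(Neg.neg '' F : Set G) < κ := by
      rwa [Cardinal.mk_image_eq neg_injective]
    have hne : Neg.neg '' F + A ≠ Set.univ := fun hc => h ⟨_, hF', hc⟩
    rw [Set.ne_univ_iff_exists_notMem] at hne
    obtain ⟨x, hx⟩ := hne
    refine ⟨x, fun f hf hxf => hx ?_⟩
    rw [Set.mem_add]
    exact ⟨-f, Set.mem_image_of_mem _ hf, x + f, hxf, by abel⟩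
  · rintro h ⟨F, hF, hFA⟩
    obtain ⟨x, hx⟩ := h (Neg.neg '' F) (by rwa [Cardinal.mk_image_eq neg_injective])
    have hxm : x ∈ F + A := hFA ▸ Set.mem_univ x
    rw [Set.mem_add] at hxm
    obtain ⟨f, hf, a, ha, hfa⟩ := hxm
    exact hx (-f) (Set.mem_image_of_mem _ hf)
      (show x + -f ∈ A by rw [show x + -f = a by rw [← hfa]; abel]; exact ha)

theorem thick_shift {κ : Cardinal.{u}} {T : Set G} (x : G) (h : Thick κ T) :
    Thick κ (shf x T) := by
  intro F hF
  obtain ⟨w, hw⟩ := h F hF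
  refine ⟨w - x, fun f hf => ?_⟩
  show x + (w - x + f) ∈ T
  rw [show x + (w - x + f) = w + f by abel]
  exact hw f hf

omit [AddCommGroup G] in
/-- Singularity: `G` is a union of fewer than `κ` sets, each of size less than `κ`. -/
theorem exists_cover (κ : Cardinal.{u}) (hκ : #G = κ) (hsing : Singular κ) :
    ∃ (ι : Type u) (E : ι → Set G), #ι < κ ∧ (∀ i, #(E i) < κ) ∧ (⋃ i, E i) = Set.univ := by
  obtain ⟨r, wo, hr⟩ := Cardinal.ord_eq G
  haveI := wo
  obtain ⟨S, hSu, hSc⟩ : ∃ S : Set G, (∀ a, ∃ b ∈ S, ¬ r b a) ∧ #S = (Ordinal.type r).cof := by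
    classical
    letI : LinearOrder G := linearOrderOfSTO r
    haveI : WellFoundedLT G := ⟨wo.wf⟩
    obtain ⟨S, hS, hSc⟩ := Order.exists_cof_eq G
    refine ⟨S, fun a => ?_, ?_⟩
    · obtain ⟨b, hb, hab⟩ := hS a
      exact ⟨b, hb, fun h => not_lt_of_ge hab h⟩
    · rw [hSc, ← Ordinal.cof_type]; rfl
  refine ⟨S, fun s => {g | r g s.1} ∪ {s.1}, ?_, ?_, ?_⟩
  · rw [hSc, ← hr, hκ]
    exact hsing.2
  · intro s
    refine lt_of_le_of_lt (Cardinal.mk_union_le _ _) ?_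
    have h1 : #{g | r g s.1} < κ := by
      have h2 := Cardinal.card_typein_lt (r := r) s.1 hr
      rw [Ordinal.card_typein, hκ] at h2
      exact h2
    have h2 : #({s.1} : Set G) < κ := by
      rw [Cardinal.mk_singleton]
      exact lt_of_lt_of_le Cardinal.one_lt_aleph0 hsing.1
    exact Cardinal.add_lt_of_lt hsing.1 h1 h2
  · apply Set.eq_univ_of_forall
    intro g
    obtain ⟨s, hsS, hns⟩ := hSu g
    refine Set.mem_iUnion.mpr ⟨⟨s, hsS⟩, ?_⟩
    rcases trichotomous_of r g s with h | h | h
    · exact Or.inl h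
    · exact Or.inr (by simpa using h)
    · exact absurd h hns

theorem thick_inter (κ : Cardinal.{u}) (hκ : #G = κ) (hsing : Singular κ)
    {T₁ T₂ : Set G} (h1 : Thick κ T₁) (h2 : Thick κ T₂) : Thick κ (T₁ ∩ T₂) := by
  obtain ⟨ι, E, hι, hE, hcov⟩ := exists_cover κ hκ hsing
  intro F hF
  have hsmall : ∀ i, #(E i + F : Set G) < κ := fun i =>
    lt_of_le_of_lt Cardinal.mk_add_le (Cardinal.mul_lt_of_lt hsing.1 (hE i) hF)
  choose x hx using fun i => h2 (E i + F) (hsmall i)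
  have hF₁small : #(Set.image2 (fun i f => x i + f) (Set.univ : Set ι) F) < κ :=
    lt_of_le_of_lt Cardinal.mk_image2_le
      (Cardinal.mul_lt_of_lt hsing.1 (by rwa [Cardinal.mk_univ]) hF)
  obtain ⟨h, hh⟩ := h1 _ hF₁small
  have hmem : h ∈ ⋃ i, E i := hcov ▸ Set.mem_univ h
  obtain ⟨i₀, hi₀⟩ := Set.mem_iUnion.mp hmem
  refine ⟨h + x i₀, fun f hf => ⟨?_, ?_⟩⟩
  · have := hh (x i₀ + f) (Set.mem_image2_of_mem (Set.mem_univ i₀) hf)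
    rwa [add_assoc]
  · have hef : h + f ∈ E i₀ + F := Set.add_mem_add hi₀ hf
    have := hx i₀ (h + f) hef
    rwa [show h + x i₀ + f = x i₀ + (h + f) by abel]

theorem exists_thick_ultrafilter (κ : Cardinal.{u}) (hκ : #G = κ) (hsing : Singular κ) :
    ∃ p : Ultrafilter G, ∀ T : Set G, Thick κ T → T ∈ p := by
  let D : Filter G :=
    { sets := {T | Thick κ T}
      univ_sets := fun F _hF => ⟨0, fun f _ => Set.mem_univ _⟩
      sets_of_superset := fun {T U} hT hTU F hF =>
        (hT F hF).imp fun x hxf f hf => hTU (hxf f hf)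
      inter_sets := fun {T U} hT hU => thick_inter κ hκ hsing hT hU }
  have hmemD : ∀ T : Set G, T ∈ D ↔ Thick κ T := fun T => Iff.rfl
  have hne : D.NeBot := by
    refine Filter.neBot_iff.mpr fun hbot => ?_
    have hthick : Thick κ (∅ : Set G) := by
      rw [← hmemD, hbot]
      exact Filter.mem_bot
    obtain ⟨x, hx⟩ := hthick {0}
      (by rw [Cardinal.mk_singleton]; exact lt_of_lt_of_le Cardinal.one_lt_aleph0 hsing.1)
    exact hx 0 rfl
  haveI := hne
  refine ⟨Ultrafilter.of D, fun T hT => ?_⟩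
  exact Filter.le_def.mp (Ultrafilter.of_le D) T ((hmemD T).mpr hT)

end StatementEightAux

open StatementEightAux in
/-- Every Abelian group of singular cardinality `κ` admits a maximal
translation invariant `κ`-bounded topology. -/
theorem addCommGroup_exists_maximal_kBounded_topology_of_singular
    {G : Type u} [AddCommGroup G] (κ : Cardinal.{u}) (hκ : #G = κ) (hsing : Singular κ) :
    ∃ τ : TopologicalSpace G, TranslationInvariant τ ∧ AddKBounded κ τ ∧
      NoIsolatedPoints τ ∧ MaximalTopology τ := by
  letI : Add (Ultrafilter G) := Ultrafilter.add
  letI : AddSemigroup (Ultrafilter G) := Ultrafilter.addSemigroup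
  -- the set of ultrafilters containing every thick set
  set C : Set (Ultrafilter G) := {u | ∀ T : Set G, Thick κ T → T ∈ u} with hCdef
  have hlarge : ∀ u ∈ C, ∀ A : Set G, A ∈ u → AddLarge κ A := by
    intro u hu A hA
    by_contra hnl
    have := hu Aᶜ (not_addLarge_iff.mp hnl)
    exact (Ultrafilter.compl_mem_iff_notMem.mp this) hA
  have hCne : C.Nonempty := by
    obtain ⟨p, hp⟩ := exists_thick_ultrafilter κ hκ hsing
    exact ⟨p, hp⟩
  have hCclosed : IsClosed C := by
    have : C = ⋂ (T : Set G) (_ : Thick κ T), {u : Ultrafilter G | T ∈ u} := by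
      ext u
      simp only [hCdef, Set.mem_setOf_eq, Set.mem_iInter]
    rw [this]
    exact isClosed_iInter fun T => isClosed_iInter fun _ => ultrafilter_isClosed_basic T
  have hCadd : ∀ u ∈ C, ∀ v ∈ C, u + v ∈ C := by
    intro u hu v hv T hT
    by_contra hTn
    have hTc : Tᶜ ∈ u + v := Ultrafilter.compl_mem_iff_notMem.mpr hTn
    have hev : ∀ᶠ x in (u : Filter G), ∀ᶠ y in (v : Filter G), x + y ∈ Tᶜ :=
      (Ultrafilter.eventually_add u v (· ∈ Tᶜ)).mp hTc
    obtain ⟨x, hxev⟩ := Filter.nonempty_of_mem (Filter.eventually_iff.mp hev)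
    have hB : {y | x + y ∈ Tᶜ} ∈ v := hxev
    have hBl : AddLarge κ {y | x + y ∈ Tᶜ} := hlarge v hv _ hB
    have hBc : Thick κ {y | x + y ∈ Tᶜ}ᶜ := by
      have : {y | x + y ∈ Tᶜ}ᶜ = shf x T := by
        ext y; simp [shf]
      rw [this]
      exact thick_shift x hT
    exact (not_addLarge_iff.mpr hBc) hBl
  obtain ⟨p, hpC, hpp⟩ := exists_idempotent_in_compact_add_subsemigroup
    (fun q : Ultrafilter G => Ultrafilter.continuous_add_left q) C hCne
    hCclosed.isCompact hCadd
  -- key consequences of idempotency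
  have hshfp : ∀ A : Set G, A ∈ p → {x : G | shf x A ∈ p} ∈ p := by
    intro A hA
    have hApp : A ∈ p + p := by rw [hpp]; exact hA
    have hev : ∀ᶠ x in (p : Filter G), ∀ᶠ y in (p : Filter G), x + y ∈ A :=
      (Ultrafilter.eventually_add p p (· ∈ A)).mp hApp
    exact hev
  -- star sets
  let star : Set G → Set G := fun A => {y | y ∈ A ∧ shf y A ∈ p}
  have hstar_mem : ∀ A : Set G, A ∈ p → star A ∈ p := by
    intro A hA
    have : star A = A ∩ {x : G | shf x A ∈ p} := rfl
    rw [this]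
    exact Filter.inter_mem hA (hshfp A hA)
  have hshf_star : ∀ (A : Set G) (y : G), shf y (star A) = star (shf y A) := by
    intro A y
    ext z
    show (y + z ∈ A ∧ shf (y + z) A ∈ p) ↔ (y + z ∈ A ∧ shf z (shf y A) ∈ p)
    rw [shf_shf]
  have hstar_shift : ∀ A : Set G, A ∈ p → ∀ y ∈ star A, shf y (star A) ∈ p := by
    intro A _hA y hy
    rw [hshf_star]
    exact hstar_mem _ hy.2
  -- the topology
  let τ : TopologicalSpace G :=
    { IsOpen := fun U => ∀ x ∈ U, shf x U ∈ p
      isOpen_univ := fun x _ => by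
        have : shf x (Set.univ : Set G) = Set.univ := by ext y; simp [shf]
        rw [this]; exact Filter.univ_mem
      isOpen_inter := fun U V hU hV x hx => by
        have : shf x (U ∩ V) = shf x U ∩ shf x V := rfl
        rw [this]
        exact Filter.inter_mem (hU x hx.1) (hV x hx.2)
      isOpen_sUnion := fun s hs x hx => by
        obtain ⟨U, hUs, hxU⟩ := hx
        exact Filter.mem_of_superset (hs U hUs x hxU)
          (shf_mono fun y hy => ⟨U, hUs, hy⟩) }
  have hopen_iff : ∀ U : Set G, τ.IsOpen U ↔ ∀ x ∈ U, shf x U ∈ p := fun U => Iff.rfl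
  have htrans : TranslationInvariant τ := by
    intro g
    rw [@continuous_def G G τ τ]
    intro U hU
    have hU' : ∀ x ∈ U, shf x U ∈ p := hU
    show ∀ x ∈ (fun x => g + x) ⁻¹' U, shf x ((fun x => g + x) ⁻¹' U) ∈ p
    intro x hx
    have he : shf x ((fun x => g + x) ⁻¹' U) = shf (g + x) U := by
      ext y; simp [shf, add_assoc]
    rw [he]
    exact hU' (g + x) hx
  refine ⟨τ, htrans, ?_, ?_, ?_⟩
  · -- κ-bounded
    rintro U hU ⟨x, hx⟩
    exact addLarge_of_shift x (hlarge p hpC _ ((hopen_iff U).mp hU x hx))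
  · -- no isolated points
    intro x hx
    have hx' : ∀ y ∈ ({x} : Set G), shf y ({x} : Set G) ∈ p := hx
    have h0 : ({0} : Set G) ∈ p := by
      have : shf x ({x} : Set G) = {0} := by
        ext y
        simp only [shf, Set.mem_setOf_eq, Set.mem_singleton_iff]
        constructor
        · intro h; have := add_eq_left.mp (by rw [h] : x + y = x); exact this
        · rintro rfl; simp
      rw [← this]
      exact hx' x rfl
    obtain ⟨F, hF, hFA⟩ := hlarge p hpC _ h0
    have hFuniv : F = Set.univ := by
      rw [← hFA, Set.add_singleton]
      simp
    rw [hFuniv, Cardinal.mk_univ, hκ] at hF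
    exact lt_irrefl κ hF
  · -- maximality
    rintro τ' hfiner ⟨V, hV', hVn⟩
    have hVn' : ¬ ∀ y ∈ V, shf y V ∈ p := fun h => hVn h
    push_neg at hVn'
    obtain ⟨x, hxV, hxp⟩ := hVn'
    have hA : (shf x V)ᶜ ∈ p := Ultrafilter.compl_mem_iff_notMem.mpr hxp
    set A := (shf x V)ᶜ with hAdef
    set W : Set G := insert (0 : G) (star A) with hWdef
    have hWopen : ∀ w ∈ W, shf w W ∈ p := by
      intro w hw
      rcases Set.mem_insert_iff.mp hw with rfl | hw
      · have : shf (0 : G) W = W := by ext y; simp [shf]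
        rw [this]
        exact Filter.mem_of_superset (hstar_mem A hA) (Set.subset_insert _ _)
      · exact Filter.mem_of_superset
          (by rw [hshf_star]; exact hstar_mem _ hw.2)
          (shf_mono (Set.subset_insert _ _))
    have hUopen : τ.IsOpen (shf (-x) W) := by
      show ∀ y ∈ shf (-x) W, shf y (shf (-x) W) ∈ p
      intro y hy
      rw [shf_shf]
      exact hWopen _ hy
    refine ⟨x, ?_⟩
    have hsing' : ({x} : Set G) = shf (-x) W ∩ V := by
      ext y
      constructor
      · intro hy
        rw [Set.mem_singleton_iff] at hy
        rw [hy]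
        exact ⟨show -x + x ∈ W by simp [hWdef], hxV⟩
      · rintro ⟨hyU, hyV⟩
        have hyW : -x + y ∈ W := hyU
        rcases hyW with h0 | hst
        · have : y = x := by
            have : x + (-x + y) = x + 0 := by rw [h0]
            simpa using this
          simp [this]
        · exfalso
          have h1 : -x + y ∈ A := hst.1
          have h2 : x + (-x + y) ∈ V := by simpa using hyV
          exact h1 h2
    rw [hsing']
    exact @IsOpen.inter G τ' _ _ (hfiner _ hUopen) hV'
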